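/- For each integer k ≥ 1, let c_k be the complex number −1/(k+1) + i·(2(k+1)²−1)/(2(k+1)²) and let r_k = 1/(2(k+1)²). Then |c_k − c_{k+1}| = r_k + r_{k+1} (so the circles with centers c_k, c_{k+1} and radii r_k, r_{k+1} are externally tangent), and the point P_k = (−(2k+3) + (2k²+6k+4)·i)/(2k²+6k+5) satisfies |P_k| = 1, |P_k − c_k| = r_k, and |P_k − c_{k+1}| = r_{k+1}. That is, the tangency point of the k-th and (k+1)-st depth circles lies on the unit circle. -/

import Mathlib

open Complex

/-- The center of the `k`-th depth circle `D_{W_k}`. -/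
noncomputable def c (k : ℕ) : ℂ :=
  -1 / ((k : ℂ) + 1) + Complex.I * ((2 * ((k : ℂ) + 1) ^ 2 - 1) / (2 * ((k : ℂ) + 1) ^ 2))

/-- The radius of the `k`-th depth circle `D_{W_k}`. -/
noncomputable def r (k : ℕ) : ℝ := 1 / (2 * ((k : ℝ) + 1) ^ 2)

/-- The tangency point of the `k`-th and `(k+1)`-st depth circles. -/
noncomputable def P (k : ℕ) : ℂ :=
  (-(2 * (k : ℂ) + 3) + (2 * (k : ℂ) ^ 2 + 6 * (k : ℂ) + 4) * Complex.I) /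
    (2 * (k : ℂ) ^ 2 + 6 * (k : ℂ) + 5)

lemma abs_of_rect (z : ℂ) (x y a : ℝ) (ha : 0 ≤ a)
    (hz : z = (x : ℂ) + (y : ℂ) * Complex.I) (hxy : x ^ 2 + y ^ 2 = a ^ 2) :
    ‖z‖ = a := by
  rw [hz, Complex.norm_add_mul_I, hxy, Real.sqrt_sq ha]

lemma hz1 (k : ℕ) (h1 : ((k : ℂ) + 1) ≠ 0) (h2 : ((k : ℂ) + 1 + 1) ≠ 0)
    (h1s : (2 * ((k : ℂ) + 1) ^ 2) ≠ 0) (h2s : (2 * ((k : ℂ) + 1 + 1) ^ 2) ≠ 0)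
    (h2b : ((k : ℂ) + 2) ≠ 0) (h2sb : (2 * ((k : ℂ) + 2) ^ 2) ≠ 0) :
    c k - c (k + 1) = ((-1 / ((k : ℝ) + 1) + 1 / ((k : ℝ) + 2) : ℝ) : ℂ) +
      (((2 * ((k : ℝ) + 1) ^ 2 - 1) / (2 * ((k : ℝ) + 1) ^ 2) -
        (2 * ((k : ℝ) + 2) ^ 2 - 1) / (2 * ((k : ℝ) + 2) ^ 2) : ℝ) : ℂ) * Complex.I := by
  unfold c; push_cast; field_simp; all_goals ring

lemma hxy1 (k : ℕ) (hr1 : ((k : ℝ) + 1) ≠ 0) (hr2 : ((k : ℝ) + 1 + 1) ≠ 0)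
    (hr1s : (2 * ((k : ℝ) + 1) ^ 2) ≠ 0) (hr2s : (2 * ((k : ℝ) + 1 + 1) ^ 2) ≠ 0)
    (hr2b : ((k : ℝ) + 2) ≠ 0) (hr2sb : (2 * ((k : ℝ) + 2) ^ 2) ≠ 0) :
    (-1 / ((k : ℝ) + 1) + 1 / ((k : ℝ) + 2)) ^ 2 +
      ((2 * ((k : ℝ) + 1) ^ 2 - 1) / (2 * ((k : ℝ) + 1) ^ 2) -
        (2 * ((k : ℝ) + 2) ^ 2 - 1) / (2 * ((k : ℝ) + 2) ^ 2)) ^ 2 =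
      (r k + r (k + 1)) ^ 2 := by
  unfold r; push_cast; field_simp; all_goals ring

lemma hz2 (k : ℕ) (h3 : (2 * (k : ℂ) ^ 2 + 6 * (k : ℂ) + 5) ≠ 0) :
    P k = ((-(2 * (k : ℝ) + 3) / (2 * (k : ℝ) ^ 2 + 6 * (k : ℝ) + 5) : ℝ) : ℂ) +
      (((2 * (k : ℝ) ^ 2 + 6 * (k : ℝ) + 4) / (2 * (k : ℝ) ^ 2 + 6 * (k : ℝ) + 5) : ℝ) : ℂ) *
        Complex.I := by
  unfold P; push_cast; field_simp; all_goals ring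

lemma hxy2 (k : ℕ) (hr3 : (2 * (k : ℝ) ^ 2 + 6 * (k : ℝ) + 5) ≠ 0) :
    (-(2 * (k : ℝ) + 3) / (2 * (k : ℝ) ^ 2 + 6 * (k : ℝ) + 5)) ^ 2 +
      ((2 * (k : ℝ) ^ 2 + 6 * (k : ℝ) + 4) / (2 * (k : ℝ) ^ 2 + 6 * (k : ℝ) + 5)) ^ 2 =
      (1 : ℝ) ^ 2 := by
  field_simp; all_goals ring

lemma hz3 (k : ℕ) (h1 : ((k : ℂ) + 1) ≠ 0) (h1s : (2 * ((k : ℂ) + 1) ^ 2) ≠ 0)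
    (h3 : (2 * (k : ℂ) ^ 2 + 6 * (k : ℂ) + 5) ≠ 0) :
    P k - c k =
      ((-(2 * (k : ℝ) + 3) / (2 * (k : ℝ) ^ 2 + 6 * (k : ℝ) + 5) + 1 / ((k : ℝ) + 1) : ℝ) : ℂ) +
      (((2 * (k : ℝ) ^ 2 + 6 * (k : ℝ) + 4) / (2 * (k : ℝ) ^ 2 + 6 * (k : ℝ) + 5) -
        (2 * ((k : ℝ) + 1) ^ 2 - 1) / (2 * ((k : ℝ) + 1) ^ 2) : ℝ) : ℂ) * Complex.I := by
  unfold P c; push_cast; field_simp; all_goals ring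

lemma hxy3 (k : ℕ) (hr1 : ((k : ℝ) + 1) ≠ 0) (hr1s : (2 * ((k : ℝ) + 1) ^ 2) ≠ 0)
    (hr3 : (2 * (k : ℝ) ^ 2 + 6 * (k : ℝ) + 5) ≠ 0) :
    (-(2 * (k : ℝ) + 3) / (2 * (k : ℝ) ^ 2 + 6 * (k : ℝ) + 5) + 1 / ((k : ℝ) + 1)) ^ 2 +
      ((2 * (k : ℝ) ^ 2 + 6 * (k : ℝ) + 4) / (2 * (k : ℝ) ^ 2 + 6 * (k : ℝ) + 5) -
        (2 * ((k : ℝ) + 1) ^ 2 - 1) / (2 * ((k : ℝ) + 1) ^ 2)) ^ 2 = (r k) ^ 2 := by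
  unfold r; field_simp; all_goals ring

lemma hz4 (k : ℕ) (h2 : ((k : ℂ) + 1 + 1) ≠ 0) (h2s : (2 * ((k : ℂ) + 1 + 1) ^ 2) ≠ 0)
    (h2b : ((k : ℂ) + 2) ≠ 0) (h2sb : (2 * ((k : ℂ) + 2) ^ 2) ≠ 0)
    (h3 : (2 * (k : ℂ) ^ 2 + 6 * (k : ℂ) + 5) ≠ 0) :
    P k - c (k + 1) =
      ((-(2 * (k : ℝ) + 3) / (2 * (k : ℝ) ^ 2 + 6 * (k : ℝ) + 5) + 1 / ((k : ℝ) + 2) : ℝ) : ℂ) +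
      (((2 * (k : ℝ) ^ 2 + 6 * (k : ℝ) + 4) / (2 * (k : ℝ) ^ 2 + 6 * (k : ℝ) + 5) -
        (2 * ((k : ℝ) + 2) ^ 2 - 1) / (2 * ((k : ℝ) + 2) ^ 2) : ℝ) : ℂ) * Complex.I := by
  unfold P c; push_cast; field_simp; all_goals ring

lemma hxy4 (k : ℕ) (hr2 : ((k : ℝ) + 1 + 1) ≠ 0) (hr2s : (2 * ((k : ℝ) + 1 + 1) ^ 2) ≠ 0)
    (hr2b : ((k : ℝ) + 2) ≠ 0) (hr2sb : (2 * ((k : ℝ) + 2) ^ 2) ≠ 0)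
    (hr3 : (2 * (k : ℝ) ^ 2 + 6 * (k : ℝ) + 5) ≠ 0) :
    (-(2 * (k : ℝ) + 3) / (2 * (k : ℝ) ^ 2 + 6 * (k : ℝ) + 5) + 1 / ((k : ℝ) + 2)) ^ 2 +
      ((2 * (k : ℝ) ^ 2 + 6 * (k : ℝ) + 4) / (2 * (k : ℝ) ^ 2 + 6 * (k : ℝ) + 5) -
        (2 * ((k : ℝ) + 2) ^ 2 - 1) / (2 * ((k : ℝ) + 2) ^ 2)) ^ 2 = (r (k + 1)) ^ 2 := by
  unfold r; push_cast; field_simp; all_goals ring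

/-- Consecutive depth circles `D_{W_k}`, `D_{W_{k+1}}` are externally tangent,
and their tangency point lies on the unit circle. -/
theorem depth_circles_tangency (k : ℕ) (hk : 1 ≤ k) :
    ‖c k - c (k + 1)‖ = r k + r (k + 1) ∧
    ‖P k‖ = 1 ∧
    ‖P k - c k‖ = r k ∧
    ‖P k - c (k + 1)‖ = r (k + 1) := by
  have h1 : ((k : ℂ) + 1) ≠ 0 := by
    have : (((k + 1 : ℕ) : ℂ)) ≠ 0 := Nat.cast_ne_zero.mpr (Nat.succ_ne_zero k)
    push_cast at this; exact this
  have h2 : ((k : ℂ) + 2) ≠ 0 := by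
    have : (((k + 2 : ℕ) : ℂ)) ≠ 0 := Nat.cast_ne_zero.mpr (by omega)
    push_cast at this; exact this
  have h3 : (2 * (k : ℂ) ^ 2 + 6 * (k : ℂ) + 5) ≠ 0 := by
    have : (((2 * k ^ 2 + 6 * k + 5 : ℕ) : ℂ)) ≠ 0 := Nat.cast_ne_zero.mpr (by omega)
    push_cast at this; exact this
  have hr1 : ((k : ℝ) + 1) ≠ 0 := by positivity
  have hr2 : ((k : ℝ) + 2) ≠ 0 := by positivity
  have hr3 : (2 * (k : ℝ) ^ 2 + 6 * (k : ℝ) + 5) ≠ 0 := by positivity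
  refine ⟨?_, ?_, ?_, ?_⟩
  · exact abs_of_rect _ _ _ _ (by unfold r; positivity) (hz1 k h1 (by rw [show ((k:ℂ)+1+1) = (k:ℂ)+2 by ring]; exact h2) (mul_ne_zero two_ne_zero (pow_ne_zero _ h1)) (by rw [show ((k:ℂ)+1+1) = (k:ℂ)+2 by ring]; exact mul_ne_zero two_ne_zero (pow_ne_zero _ h2)) h2 (mul_ne_zero two_ne_zero (pow_ne_zero _ h2))) (hxy1 k hr1 (by positivity) (by positivity) (by positivity) hr2 (by positivity))
  · exact abs_of_rect _ _ _ _ zero_le_one (hz2 k h3) (hxy2 k hr3)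
  · exact abs_of_rect _ _ _ _ (by unfold r; positivity) (hz3 k h1 (mul_ne_zero two_ne_zero (pow_ne_zero _ h1)) h3) (hxy3 k hr1 (by positivity) hr3)
  · exact abs_of_rect _ _ _ _ (by unfold r; positivity) (hz4 k (by rw [show ((k:ℂ)+1+1) = (k:ℂ)+2 by ring]; exact h2) (by rw [show ((k:ℂ)+1+1) = (k:ℂ)+2 by ring]; exact mul_ne_zero two_ne_zero (pow_ne_zero _ h2)) h2 (mul_ne_zero two_ne_zero (pow_ne_zero _ h2)) h3) (hxy4 k (by positivity) (by positivity) hr2 (by positivity) hr3)
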